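/- Let d ≥ 1 and let ψ be an element of the free ℂ-algebra on two generators X, Y. For ζ, ξ ∈ ℂ^{d×d}, let ψ(ζ, ξ) ∈ ℂ^{d×d} denote the image of ψ under the ℂ-algebra homomorphism to the matrix algebra sending X ↦ ζ and Y ↦ ξ. Assume that the image of ψ under the ℂ-algebra homomorphism to the commutative polynomial ring ℂ[x, y] sending X ↦ x, Y ↦ y is a nonzero polynomial. Then the set {(ζ, ξ) ∈ (ℂ^{d×d})² : det(ψ(ζ, ξ)) ≠ 0} is open and dense in (ℂ^{d×d})². -/

import Mathlib

open Matrix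

/-- Evaluation of a noncommutative polynomial `ψ` (an element of the free `ℂ`-algebra on
two generators `X`, `Y`) at a pair of `d × d` matrices `(ζ, ξ)`: the image of `ψ` under
the unique `ℂ`-algebra homomorphism sending `X ↦ ζ` and `Y ↦ ξ`. -/
noncomputable def matEval {d : ℕ} (ψ : FreeAlgebra ℂ (Fin 2))
    (ζ ξ : Matrix (Fin d) (Fin d) ℂ) : Matrix (Fin d) (Fin d) ℂ :=
  FreeAlgebra.lift ℂ ![ζ, ξ] ψ

/-- The image of `ψ` in the commutative polynomial ring `ℂ[x, y]`, i.e. under the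
`ℂ`-algebra homomorphism `X ↦ x`, `Y ↦ y`. -/
noncomputable def commEval (ψ : FreeAlgebra ℂ (Fin 2)) : MvPolynomial (Fin 2) ℂ :=
  FreeAlgebra.lift ℂ (fun i => MvPolynomial.X i) ψ

attribute [local instance] Matrix.normedAddCommGroup Matrix.normedSpace

section Aux

variable (d : ℕ)

abbrev σd := Fin 2 × Fin d × Fin d

/-- generic matrices -/
noncomputable def genMat (i : Fin 2) : Matrix (Fin d) (Fin d) (MvPolynomial (σd d) ℂ) :=
  Matrix.of fun j k => MvPolynomial.X (i, j, k)

noncomputable def Φd : FreeAlgebra ℂ (Fin 2) →ₐ[ℂ]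
    Matrix (Fin d) (Fin d) (MvPolynomial (σd d) ℂ) :=
  FreeAlgebra.lift ℂ (genMat d)

noncomputable def fLin :
    (Matrix (Fin d) (Fin d) ℂ × Matrix (Fin d) (Fin d) ℂ) →ₗ[ℂ] (σd d → ℂ) where
  toFun p := fun q => ![p.1, p.2] q.1 q.2.1 q.2.2
  map_add' p p' := by
    funext q
    obtain ⟨i, j, k⟩ := q
    fin_cases i <;> simp
  map_smul' c p := by
    funext q
    obtain ⟨i, j, k⟩ := q
    fin_cases i <;> simp

theorem key (ψ : FreeAlgebra ℂ (Fin 2)) (ζ ξ : Matrix (Fin d) (Fin d) ℂ) :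
    MvPolynomial.eval (fLin d (ζ, ξ)) (Φd d ψ).det = (matEval ψ ζ ξ).det := by
  rw [RingHom.map_det]
  congr 1
  have : (((MvPolynomial.aeval (R := ℂ) (fLin d (ζ, ξ))).mapMatrix).comp (Φd d)) ψ
      = FreeAlgebra.lift ℂ ![ζ, ξ] ψ := by
    congr 1
    apply FreeAlgebra.hom_ext
    funext i
    ext j k
    fin_cases i <;>
      simp [Φd, genMat, fLin, AlgHom.mapMatrix]
  simpa [MvPolynomial.aeval_def, MvPolynomial.eval, matEval] using this

end Aux

theorem scalarEval (d : ℕ) (ψ : FreeAlgebra ℂ (Fin 2)) (a : Fin 2 → ℂ) :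
    matEval ψ (a 0 • (1 : Matrix (Fin d) (Fin d) ℂ)) (a 1 • 1)
      = MvPolynomial.eval a (commEval ψ) • 1 := by
  have : ((Algebra.ofId ℂ (Matrix (Fin d) (Fin d) ℂ)).comp
      ((MvPolynomial.aeval a).comp
        (FreeAlgebra.lift ℂ fun i => (MvPolynomial.X i : MvPolynomial (Fin 2) ℂ)))) ψ
      = FreeAlgebra.lift ℂ ![a 0 • 1, a 1 • 1] ψ := by
    congr 1
    apply FreeAlgebra.hom_ext
    funext i
    fin_cases i <;> simp [Algebra.ofId, Algebra.algebraMap_eq_smul_one]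
  have h2 : (MvPolynomial.aeval a) (commEval ψ) = MvPolynomial.eval a (commEval ψ) := by
    rw [← MvPolynomial.coe_aeval_eq_eval]; rfl
  calc matEval ψ (a 0 • 1) (a 1 • 1)
      = ((Algebra.ofId ℂ (Matrix (Fin d) (Fin d) ℂ)).comp
        ((MvPolynomial.aeval a).comp
          (FreeAlgebra.lift ℂ fun i => (MvPolynomial.X i : MvPolynomial (Fin 2) ℂ)))) ψ :=
        this.symm
    _ = Algebra.ofId ℂ _ ((MvPolynomial.aeval a) (commEval ψ)) := rfl
    _ = MvPolynomial.eval a (commEval ψ) • 1 := by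
        rw [h2, Algebra.ofId_apply, Algebra.algebraMap_eq_smul_one]

/-- if the commutative image of `ψ` in `ℂ[x, y]` is nonzero, then the set
of pairs of matrices `(ζ, ξ)` with `det(ψ(ζ, ξ)) ≠ 0` is open and dense. -/
theorem stmt14 (d : ℕ) (hd : 1 ≤ d)
    (ψ : FreeAlgebra ℂ (Fin 2)) (hψ : commEval ψ ≠ 0) :
    IsOpen {p : Matrix (Fin d) (Fin d) ℂ × Matrix (Fin d) (Fin d) ℂ |
        (matEval ψ p.1 p.2).det ≠ 0} ∧
    Dense {p : Matrix (Fin d) (Fin d) ℂ × Matrix (Fin d) (Fin d) ℂ |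
        (matEval ψ p.1 p.2).det ≠ 0} := by
  set P := (Φd d ψ).det with hP
  have hset : {p : Matrix (Fin d) (Fin d) ℂ × Matrix (Fin d) (Fin d) ℂ |
      (matEval ψ p.1 p.2).det ≠ 0}
      = {p | MvPolynomial.eval (fLin d p) P ≠ 0} := by
    ext p
    simp only [Set.mem_setOf_eq, hP, ← key d ψ p.1 p.2]
  have hg : AnalyticOnNhd ℂ (fun p : Matrix (Fin d) (Fin d) ℂ × Matrix (Fin d) (Fin d) ℂ
      => MvPolynomial.eval (fLin d p) P) Set.univ :=
    AnalyticOnNhd.eval_linearMap (fLin d) P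
  have hcont : Continuous (fun p : Matrix (Fin d) (Fin d) ℂ × Matrix (Fin d) (Fin d) ℂ
      => MvPolynomial.eval (fLin d p) P) := by
    rw [← continuousOn_univ]
    exact hg.continuousOn
  -- witness point
  obtain ⟨a, ha⟩ : ∃ a : Fin 2 → ℂ, MvPolynomial.eval a (commEval ψ) ≠ 0 := by
    by_contra h
    push_neg at h
    exact hψ (MvPolynomial.funext fun x => by simp [h x])
  set p₀ : Matrix (Fin d) (Fin d) ℂ × Matrix (Fin d) (Fin d) ℂ := (a 0 • 1, a 1 • 1) with hp₀
  have hgp₀ : MvPolynomial.eval (fLin d p₀) P ≠ 0 := by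
    rw [hP, key d ψ p₀.1 p₀.2]
    have : matEval ψ p₀.1 p₀.2 = MvPolynomial.eval a (commEval ψ) • 1 := scalarEval d ψ a
    rw [this]
    rw [Matrix.det_smul, Matrix.det_one, mul_one]
    exact pow_ne_zero _ ha
  constructor
  · rw [hset]
    exact isOpen_compl_singleton.preimage hcont
  · rw [hset, dense_iff_inter_open]
    rintro U hU ⟨x, hx⟩
    by_contra h
    rw [Set.not_nonempty_iff_eq_empty] at h
    have hzero : ∀ y ∈ U, MvPolynomial.eval (fLin d y) P = 0 := by
      intro y hy
      by_contra hy0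
      exact Set.eq_empty_iff_forall_notMem.mp h y ⟨hy, hy0⟩
    have hev : (fun p => MvPolynomial.eval (fLin d p) P) =ᶠ[nhds x] 0 :=
      Filter.eventuallyEq_of_mem (hU.mem_nhds hx) (fun y hy => hzero y hy)
    have := hg.eqOn_zero_of_preconnected_of_eventuallyEq_zero
      isPreconnected_univ (Set.mem_univ x) hev
    exact hgp₀ (this (Set.mem_univ p₀))
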